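/- Let f : ℝ^{n×n} → ℝ be continuous on the set of positive semidefinite matrices, and consider the problem min f(Z) over PSD matrices Z with rank(Z) ≤ r, together with the factorized problem min f(S Sᵀ) over S ∈ ℝ^{n×r}. If Z̄ = S̄ S̄ᵀ with S̄ ∈ ℝ^{n×r}, then Z̄ is a local minimizer of the rank-constrained problem if and only if S̄ is a local minimizer of the factorized problem. -/

import Mathlib

open Matrix

noncomputable def nuclearNorm {n m : ℕ} (X : Matrix (Fin n) (Fin m) ℝ) : ℝ :=
  ∑ i, Real.sqrt ((show (Xᵀ * X).IsHermitian by simpa using Matrix.isHermitian_conjTranspose_mul_self X).eigenvalues i)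

noncomputable def frob {n m : ℕ} (X : Matrix (Fin n) (Fin m) ℝ) : ℝ :=
  Real.sqrt (∑ i, ∑ j, (X i j)^2)

section Aux

open Filter Topology

attribute [local instance] Matrix.frobeniusNormedAddCommGroup Matrix.frobeniusNormedSpace

variable {n m r k d : ℕ}

/-! ### Linear-algebraic lemmas -/

lemma dot_fact (T : Matrix (Fin n) (Fin k) ℝ) (x y : Fin n → ℝ) :
    (Tᵀ *ᵥ x) ⬝ᵥ (Tᵀ *ᵥ y) = x ⬝ᵥ ((T * Tᵀ) *ᵥ y) := by
  rw [← Matrix.mulVec_mulVec, Matrix.dotProduct_mulVec x T, ← Matrix.mulVec_transpose]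

lemma inner_toEuclideanLin (T : Matrix (Fin n) (Fin k) ℝ) (x y : EuclideanSpace ℝ (Fin n)) :
    inner ℝ (Matrix.toEuclideanLin Tᵀ x) (Matrix.toEuclideanLin Tᵀ y) =
      (inner ℝ x (Matrix.toEuclideanLin (T * Tᵀ) y) : ℝ) := by
  show (Tᵀ *ᵥ y.ofLp) ⬝ᵥ star (Tᵀ *ᵥ x.ofLp) = ((T * Tᵀ) *ᵥ y.ofLp) ⬝ᵥ star x.ofLp
  simp only [star_trivial]
  rw [dotProduct_comm, dotProduct_comm _ x.ofLp]
  exact dot_fact T x.ofLp y.ofLp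

lemma matrix_eq_of_inner (M N : Matrix (Fin n) (Fin n) ℝ)
    (h : ∀ x y : EuclideanSpace ℝ (Fin n),
      (inner ℝ x (Matrix.toEuclideanLin M y) : ℝ) = inner ℝ x (Matrix.toEuclideanLin N y)) :
    M = N := by
  ext i j
  have := h (EuclideanSpace.single i 1) (EuclideanSpace.single j 1)
  simpa [Matrix.toEuclideanLin_apply, EuclideanSpace.inner_single_left,
    Matrix.mulVec_single] using this

lemma toEuclideanLin_mul {a b c : ℕ} (A : Matrix (Fin a) (Fin b) ℝ) (B : Matrix (Fin b) (Fin c) ℝ) :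
    Matrix.toEuclideanLin (A * B) =
      (Matrix.toEuclideanLin A).comp (Matrix.toEuclideanLin B) := by
  apply LinearMap.ext
  intro x
  apply (WithLp.equiv 2 _).injective
  apply funext
  intro i
  simp [Matrix.toEuclideanLin_apply, WithLp.equiv_symm_apply, PiLp.toLp_apply, ← Matrix.mulVec_mulVec]

noncomputable def padL (d r : ℕ) : EuclideanSpace ℝ (Fin d) →ₗ[ℝ] EuclideanSpace ℝ (Fin r) where
  toFun x := (WithLp.equiv 2 _).symm
      (fun j : Fin r => if hj : (j : ℕ) < d then x ⟨j, hj⟩ else 0)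
  map_add' := by
    intro x y
    apply (WithLp.equiv 2 _).injective
    apply funext
    intro j
    by_cases hj : (j : ℕ) < d <;>
      simp [WithLp.equiv_symm_apply, PiLp.toLp_apply, hj, PiLp.add_apply]
  map_smul' := by
    intro c x
    apply (WithLp.equiv 2 _).injective
    apply funext
    intro j
    by_cases hj : (j : ℕ) < d <;>
      simp [WithLp.equiv_symm_apply, PiLp.toLp_apply, hj, PiLp.smul_apply, smul_eq_mul]

lemma padL_apply (x : EuclideanSpace ℝ (Fin d)) :
    padL d r x = (WithLp.equiv 2 _).symm
      (fun j : Fin r => if hj : (j : ℕ) < d then x ⟨j, hj⟩ else 0) := rfl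

noncomputable def padIso (h : d ≤ r) :
    EuclideanSpace ℝ (Fin d) →ₗᵢ[ℝ] EuclideanSpace ℝ (Fin r) where
  toLinearMap := padL d r
  norm_map' := by
    intro x
    rw [padL_apply, EuclideanSpace.norm_eq, EuclideanSpace.norm_eq]
    congr 1
    set F : ℕ → ℝ := fun t => if ht : t < d then ‖x ⟨t, ht⟩‖ ^ 2 else 0 with hF
    have h1 : ∑ j : Fin r, ‖(WithLp.equiv 2 (Fin r → ℝ)).symm
        (fun j : Fin r => if hj : (j : ℕ) < d then x ⟨j, hj⟩ else 0) j‖ ^ 2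
        = ∑ t ∈ Finset.range r, F t := by
      rw [← Fin.sum_univ_eq_sum_range]
      refine Finset.sum_congr rfl fun j _ => ?_
      by_cases hj : (j : ℕ) < d <;> simp [WithLp.equiv_symm_apply, PiLp.toLp_apply, hj, hF]
    have h2 : ∑ i : Fin d, ‖x i‖ ^ 2 = ∑ t ∈ Finset.range d, F t := by
      rw [← Fin.sum_univ_eq_sum_range]
      refine Finset.sum_congr rfl fun i _ => by simp [hF]
    rw [h1, h2]
    refine (Finset.sum_subset (Finset.range_subset_range.2 h) fun t _ ht => ?_).symm
    simp only [Finset.mem_range, not_lt] at ht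
    simp [hF, Nat.not_lt.2 ht]

lemma finrank_range_toEuclideanLin {a b : ℕ} (M : Matrix (Fin a) (Fin b) ℝ) :
    Module.finrank ℝ ↥(LinearMap.range (Matrix.toEuclideanLin M)) = M.rank := by
  have heq : Matrix.toEuclideanLin M =
      ((WithLp.linearEquiv 2 ℝ (Fin a → ℝ)).symm.toLinearMap.comp M.mulVecLin).comp
        (WithLp.linearEquiv 2 ℝ (Fin b → ℝ)).toLinearMap := by
    ext x
    rfl
  rw [heq, LinearMap.range_comp, LinearEquiv.range, Submodule.map_top, LinearMap.range_comp]
  rw [Matrix.rank]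
  exact LinearEquiv.finrank_map_eq _ _

/-- Any PSD matrix of rank at most `r` admits a factorization through `n × r` matrices. -/
lemma exists_factor (Z : Matrix (Fin n) (Fin n) ℝ) (hZ : Z.PosSemidef) (hr : Z.rank ≤ r) :
    ∃ T : Matrix (Fin n) (Fin r) ℝ, T * Tᵀ = Z := by
  classical
  obtain ⟨C, hC⟩ : ∃ C : Matrix (Fin n) (Fin n) ℝ, Z = star C * C := by
    open scoped MatrixOrder in
    exact CStarAlgebra.nonneg_iff_eq_star_mul_self.mp hZ.nonneg
  set B := Cᵀ with hB
  have hBB : B * Bᵀ = Z := by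
    rw [hC, hB, Matrix.transpose_transpose, Matrix.star_eq_conjTranspose,
      Matrix.conjTranspose_eq_transpose_of_trivial]
  set t := Matrix.toEuclideanLin Bᵀ with ht
  have hd : Module.finrank ℝ ↥(LinearMap.range t) ≤ r := by
    rw [finrank_range_toEuclideanLin, Matrix.rank_transpose]
    have : B.rank = Z.rank := by rw [← hBB, Matrix.rank_self_mul_transpose]
    omega
  set d := Module.finrank ℝ ↥(LinearMap.range t)
  have b := stdOrthonormalBasis ℝ ↥(LinearMap.range t)
  set ψ : ↥(LinearMap.range t) →ₗᵢ[ℝ] EuclideanSpace ℝ (Fin r) :=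
    (padIso hd).comp b.repr.toLinearIsometry with hψ
  set s : EuclideanSpace ℝ (Fin n) →ₗ[ℝ] EuclideanSpace ℝ (Fin r) :=
    ψ.toLinearMap.comp t.rangeRestrict with hs
  refine ⟨(Matrix.toEuclideanLin.symm s)ᵀ, ?_⟩
  have hTt : Matrix.toEuclideanLin ((Matrix.toEuclideanLin.symm s)ᵀ)ᵀ = s := by
    rw [Matrix.transpose_transpose]; exact Matrix.toEuclideanLin.apply_symm_apply s
  rw [← hBB]
  refine matrix_eq_of_inner _ _ fun x y => ?_
  rw [← inner_toEuclideanLin, ← inner_toEuclideanLin, hTt]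
  have h1 : (inner ℝ (s x) (s y) : ℝ) = inner ℝ (t.rangeRestrict x) (t.rangeRestrict y) := by
    simp only [hs, LinearMap.comp_apply]
    exact ψ.inner_map_map _ _
  rw [h1]
  rfl

/-- Two factorizations of the same PSD matrix differ by an orthogonal transformation. -/
lemma exists_rotation (T S : Matrix (Fin n) (Fin r) ℝ) (h : T * Tᵀ = S * Sᵀ) :
    ∃ Q : Matrix (Fin r) (Fin r) ℝ, Q * Qᵀ = 1 ∧ S = T * Q := by
  classical
  set t := Matrix.toEuclideanLin Tᵀ with ht
  set s := Matrix.toEuclideanLin Sᵀ with hs0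
  have hinner : ∀ x y : EuclideanSpace ℝ (Fin n), (inner ℝ (t x) (t y) : ℝ) = inner ℝ (s x) (s y) := by
    intro x y
    rw [ht, hs0, inner_toEuclideanLin, inner_toEuclideanLin, h]
  have hker : LinearMap.ker t ≤ LinearMap.ker s := by
    intro x hx
    rw [LinearMap.mem_ker] at hx ⊢
    have := hinner x x
    rw [hx, inner_zero_left] at this
    exact inner_self_eq_zero.mp this.symm
  set φ : ↥(LinearMap.range t) →ₗ[ℝ] EuclideanSpace ℝ (Fin r) :=
    (Submodule.liftQ (LinearMap.ker t) s hker).comp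
      (t.quotKerEquivRange.symm : ↥(LinearMap.range t) →ₗ[ℝ] _) with hφ
  have hkey : ∀ x : EuclideanSpace ℝ (Fin n), φ (t.rangeRestrict x) = s x := by
    intro x
    have h1 : t.quotKerEquivRange.symm (t.rangeRestrict x) = Submodule.Quotient.mk x := by
      apply t.quotKerEquivRange.injective
      rw [LinearEquiv.apply_symm_apply]
      apply Subtype.ext
      rw [LinearMap.quotKerEquivRange_apply_mk]
      rfl
    rw [hφ, LinearMap.comp_apply]
    erw [h1]
    rw [Submodule.liftQ_apply]
  have hnorm : ∀ v : ↥(LinearMap.range t), ‖φ v‖ = ‖v‖ := by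
    rintro ⟨v, hv⟩
    obtain ⟨x, rfl⟩ := hv
    have hv' : (⟨t x, ⟨x, rfl⟩⟩ : ↥(LinearMap.range t)) = t.rangeRestrict x := rfl
    rw [hv', hkey]
    have h2 := hinner x x
    rw [real_inner_self_eq_norm_sq, real_inner_self_eq_norm_sq] at h2
    have : ‖(t.rangeRestrict x : EuclideanSpace ℝ (Fin r))‖ = ‖t x‖ := rfl
    rw [show ‖t.rangeRestrict x‖ = ‖t x‖ from this,
      ← Real.sqrt_sq (norm_nonneg (s x)), ← Real.sqrt_sq (norm_nonneg (t x)), h2]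
  set Lisom : ↥(LinearMap.range t) →ₗᵢ[ℝ] EuclideanSpace ℝ (Fin r) := ⟨φ, hnorm⟩ with hL
  set L := Lisom.extend with hLe
  set Q₀ : Matrix (Fin r) (Fin r) ℝ := Matrix.toEuclideanLin.symm L.toLinearMap with hQ₀
  have hQ₀' : Matrix.toEuclideanLin Q₀ = L.toLinearMap :=
    Matrix.toEuclideanLin.apply_symm_apply _
  have hST : Sᵀ = Q₀ * Tᵀ := by
    apply Matrix.toEuclideanLin.injective
    rw [toEuclideanLin_mul, hQ₀']
    apply LinearMap.ext
    intro x
    have h3 : L (t.rangeRestrict x) = Lisom (t.rangeRestrict x) :=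
      Lisom.extend_apply (t.rangeRestrict x)
    have h4 : (t.rangeRestrict x : EuclideanSpace ℝ (Fin r)) = t x := rfl
    calc s x = φ (t.rangeRestrict x) := (hkey x).symm
      _ = L (t x) := by rw [← h4, h3]; rfl
      _ = (L.toLinearMap.comp t) x := rfl
  refine ⟨Q₀ᵀ, ?_, ?_⟩
  · have horth : ∀ i j, (Q₀ᵀ * Q₀) i j = (1 : Matrix (Fin r) (Fin r) ℝ) i j := by
      intro i j
      have h5 : (inner ℝ (L (EuclideanSpace.single i 1)) (L (EuclideanSpace.single j 1)) : ℝ) =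
          inner ℝ (EuclideanSpace.single i (1:ℝ)) (EuclideanSpace.single j (1:ℝ)) :=
        L.inner_map_map _ _
      have h6 : ∀ a : Fin r, L (EuclideanSpace.single a 1) =
          Matrix.toEuclideanLin Q₀ (EuclideanSpace.single a 1) := fun a => by rw [hQ₀']; rfl
      rw [h6, h6] at h5
      have h7 : ∀ a : Fin r, ∀ b : Fin r,
          (Matrix.toEuclideanLin Q₀ (EuclideanSpace.single a (1:ℝ))) b = Q₀ b a := by
        intro a b
        have hb : (Matrix.toEuclideanLin Q₀ (EuclideanSpace.single a (1:ℝ))) b =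
            ∑ kk, Q₀ b kk * (EuclideanSpace.single a (1:ℝ)) kk := rfl
        rw [hb]
        simp [EuclideanSpace.single_apply, mul_ite, mul_one, mul_zero]
      rw [PiLp.inner_apply] at h5
      simp only [RCLike.inner_apply, starRingEnd_apply, star_trivial, h7] at h5
      rw [Matrix.mul_apply, Matrix.one_apply]
      rw [EuclideanSpace.inner_single_left] at h5
      simp only [_root_.map_one, one_mul, EuclideanSpace.single_apply] at h5
      simp only [Matrix.transpose_apply]
      rw [← h5]; exact Finset.sum_congr rfl fun _ _ => mul_comm _ _
    exact Matrix.ext horth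
  · calc S = Sᵀᵀ := (Matrix.transpose_transpose S).symm
      _ = (Q₀ * Tᵀ)ᵀ := by rw [hST]
      _ = T * Q₀ᵀ := by rw [Matrix.transpose_mul, Matrix.transpose_transpose]

/-! ### Norm lemmas -/

lemma frob_eq_norm (X : Matrix (Fin n) (Fin m) ℝ) : frob X = ‖X‖ := by
  rw [frob, Matrix.frobenius_norm_def, Real.sqrt_eq_rpow]
  congr 1
  refine Finset.sum_congr rfl fun i _ => Finset.sum_congr rfl fun j _ => ?_
  simp [Real.norm_eq_abs, sq_abs]

lemma mul_transpose_sub_est (A B : Matrix (Fin n) (Fin m) ℝ) :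
    ‖A * Aᵀ - B * Bᵀ‖ ≤ ‖A - B‖ * (‖A‖ + ‖B‖) := by
  have hid : A * Aᵀ - B * Bᵀ = (A - B) * Aᵀ + B * (A - B)ᵀ := by
    rw [Matrix.transpose_sub, Matrix.sub_mul, Matrix.mul_sub]
    abel
  calc ‖A * Aᵀ - B * Bᵀ‖ = ‖(A - B) * Aᵀ + B * (A - B)ᵀ‖ := by rw [hid]
    _ ≤ ‖(A - B) * Aᵀ‖ + ‖B * (A - B)ᵀ‖ := norm_add_le _ _
    _ ≤ ‖A - B‖ * ‖Aᵀ‖ + ‖B‖ * ‖(A - B)ᵀ‖ :=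
        add_le_add (Matrix.frobenius_norm_mul _ _) (Matrix.frobenius_norm_mul _ _)
    _ = ‖A - B‖ * (‖A‖ + ‖B‖) := by
        rw [Matrix.frobenius_norm_transpose, Matrix.frobenius_norm_transpose]; ring

lemma norm_sq_eq_trace (T : Matrix (Fin n) (Fin r) ℝ) :
    ‖T‖ ^ 2 = Matrix.trace (T * Tᵀ) := by
  rw [← frob_eq_norm, frob, Real.sq_sqrt (by positivity)]
  simp [Matrix.trace, Matrix.diag, Matrix.mul_apply, sq]

lemma entry_le_norm (Z : Matrix (Fin n) (Fin n) ℝ) (i j : Fin n) : |Z i j| ≤ ‖Z‖ := by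
  rw [← frob_eq_norm, frob, ← Real.sqrt_sq_eq_abs]
  apply Real.sqrt_le_sqrt
  calc Z i j ^ 2 ≤ ∑ jj, Z i jj ^ 2 :=
        Finset.single_le_sum (fun jj _ => sq_nonneg (Z i jj)) (Finset.mem_univ j)
    _ ≤ ∑ ii, ∑ jj, Z ii jj ^ 2 :=
        Finset.single_le_sum (f := fun ii => ∑ jj, Z ii jj ^ 2)
          (fun ii _ => Finset.sum_nonneg fun jj _ => sq_nonneg _) (Finset.mem_univ i)

lemma trace_le (Z : Matrix (Fin n) (Fin n) ℝ) : Matrix.trace Z ≤ n * ‖Z‖ := by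
  calc Matrix.trace Z = ∑ i, Z i i := rfl
    _ ≤ ∑ _i : Fin n, ‖Z‖ := Finset.sum_le_sum fun i _ =>
        (le_abs_self _).trans (entry_le_norm Z i i)
    _ = n * ‖Z‖ := by simp [Finset.sum_const, mul_comm]

/-! ### Main theorem -/

theorem stmt_6 {n r : ℕ} (f : Matrix (Fin n) (Fin n) ℝ → ℝ)
    (hf : ContinuousOn f {Z : Matrix (Fin n) (Fin n) ℝ | Z.PosSemidef})
    (Sbar : Matrix (Fin n) (Fin r) ℝ) (Zbar : Matrix (Fin n) (Fin n) ℝ)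
    (hZbar : Zbar = Sbar * Sbarᵀ) :
    (∃ ε > (0:ℝ), ∀ Z : Matrix (Fin n) (Fin n) ℝ,
        Z.PosSemidef → Z.rank ≤ r → frob (Z - Zbar) < ε → f Zbar ≤ f Z) ↔
    (∃ ε > (0:ℝ), ∀ S : Matrix (Fin n) (Fin r) ℝ,
        frob (S - Sbar) < ε → f (Sbar * Sbarᵀ) ≤ f (S * Sᵀ)) := by
  constructor
  · rintro ⟨ε, hε, H⟩
    refine ⟨min 1 (ε / (2 * ‖Sbar‖ + 2)), lt_min one_pos (by positivity), fun S hS => ?_⟩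
    rw [frob_eq_norm] at hS
    have h1 : ‖S - Sbar‖ < 1 := hS.trans_le (min_le_left _ _)
    have h2 : ‖S - Sbar‖ < ε / (2 * ‖Sbar‖ + 2) := hS.trans_le (min_le_right _ _)
    have h2' : ‖S - Sbar‖ * (2 * ‖Sbar‖ + 2) < ε := by
      rw [lt_div_iff₀ (by positivity)] at h2
      exact h2
    have est := mul_transpose_sub_est S Sbar
    have htri : ‖S‖ - ‖Sbar‖ ≤ ‖S - Sbar‖ := norm_sub_norm_le S Sbar
    have hts : ‖S * Sᵀ - Sbar * Sbarᵀ‖ < ε := by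
      have h3 : ‖S - Sbar‖ * (‖S‖ + ‖Sbar‖) ≤ ‖S - Sbar‖ * (2 * ‖Sbar‖ + 2) := by
        apply mul_le_mul_of_nonneg_left _ (norm_nonneg _)
        nlinarith [norm_nonneg Sbar]
      linarith
    rw [← hZbar]
    apply H (S * Sᵀ)
    · simpa using Matrix.posSemidef_self_mul_conjTranspose S
    · rw [Matrix.rank_self_mul_transpose]
      exact Matrix.rank_le_width S
    · rw [frob_eq_norm, hZbar]
      exact hts
  · rintro ⟨ε, hε, H⟩
    have key : ∃ δ > (0:ℝ), ∀ Z : Matrix (Fin n) (Fin n) ℝ, Z.PosSemidef → Z.rank ≤ r →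
        ‖Z - Zbar‖ < δ → ∃ S : Matrix (Fin n) (Fin r) ℝ, S * Sᵀ = Z ∧ ‖S - Sbar‖ < ε := by
      by_contra hcon
      push_neg at hcon
      have hseq : ∀ kk : ℕ, ∃ Z : Matrix (Fin n) (Fin n) ℝ, Z.PosSemidef ∧ Z.rank ≤ r ∧
          ‖Z - Zbar‖ < 1 / (kk + 1) ∧
          ∀ S : Matrix (Fin n) (Fin r) ℝ, S * Sᵀ = Z → ε ≤ ‖S - Sbar‖ := by
        intro kk
        exact hcon (1 / (kk + 1)) (by positivity)
      choose Zs hPSD hrank hclose hbad using hseq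
      have hfac : ∀ kk : ℕ, ∃ T : Matrix (Fin n) (Fin r) ℝ, T * Tᵀ = Zs kk :=
        fun kk => exists_factor (Zs kk) (hPSD kk) (hrank kk)
      choose Ts hTs using hfac
      set R := Real.sqrt (n * (‖Zbar‖ + 1)) with hR
      have hZbnd : ∀ kk, ‖Zs kk‖ ≤ ‖Zbar‖ + 1 := by
        intro kk
        have := norm_sub_norm_le (Zs kk) Zbar
        have h1 : (1 : ℝ) / (kk + 1) ≤ 1 := by
          rw [div_le_one (by positivity)]
          linarith [Nat.cast_nonneg (α := ℝ) kk]
        linarith [hclose kk]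
      have hbound : ∀ kk, ‖Ts kk‖ ≤ R := by
        intro kk
        have h1 : ‖Ts kk‖ ^ 2 = Matrix.trace (Zs kk) := by
          rw [norm_sq_eq_trace, hTs]
        have h2 : ‖Ts kk‖ ^ 2 ≤ n * (‖Zbar‖ + 1) := by
          rw [h1]
          calc Matrix.trace (Zs kk) ≤ n * ‖Zs kk‖ := trace_le _
            _ ≤ n * (‖Zbar‖ + 1) := by
                apply mul_le_mul_of_nonneg_left (hZbnd kk) (Nat.cast_nonneg n)
        calc ‖Ts kk‖ = Real.sqrt (‖Ts kk‖ ^ 2) := (Real.sqrt_sq (norm_nonneg _)).symm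
          _ ≤ R := Real.sqrt_le_sqrt h2
      have hball : ∀ kk, Ts kk ∈ Metric.closedBall (0 : Matrix (Fin n) (Fin r) ℝ) R := by
        intro kk
        rw [mem_closedBall_zero_iff]
        exact hbound kk
      obtain ⟨Tl, -, φ, hφmono, hφlim⟩ :=
        tendsto_subseq_of_bounded Metric.isBounded_closedBall hball
      have hTlR : ∀ kk, ‖Ts (φ kk) - Tl‖ * (R + ‖Tl‖) ≥ 0 := by
        intro kk; positivity
      have hdiff0 : Tendsto (fun kk => ‖Ts (φ kk) - Tl‖) atTop (𝓝 0) := by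
        have := hφlim
        rw [tendsto_iff_norm_sub_tendsto_zero] at this
        exact this
      have hZlim : Tendsto (fun kk => Zs (φ kk)) atTop (𝓝 Zbar) := by
        rw [← tendsto_sub_nhds_zero_iff]
        refine squeeze_zero_norm (f := fun kk => Zs (φ kk) - Zbar)
          (a := fun kk : ℕ => 1 / (kk + 1)) ?_ ?_
        · intro kk
          refine (hclose (φ kk)).le.trans ?_
          apply one_div_le_one_div_of_le (by positivity)
          have h9 : kk ≤ φ kk := hφmono.le_apply
          push_cast
          have : (kk : ℝ) ≤ (φ kk : ℝ) := Nat.cast_le.mpr h9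
          linarith
        · exact tendsto_one_div_add_atTop_nhds_zero_nat
      have hTTlim : Tendsto (fun kk => Ts (φ kk) * (Ts (φ kk))ᵀ) atTop (𝓝 (Tl * Tlᵀ)) := by
        rw [← tendsto_sub_nhds_zero_iff]
        refine squeeze_zero_norm (f := fun kk => Ts (φ kk) * (Ts (φ kk))ᵀ - Tl * Tlᵀ)
          (a := fun kk => ‖Ts (φ kk) - Tl‖ * (R + ‖Tl‖)) ?_ ?_
        · intro kk
          refine (mul_transpose_sub_est _ _).trans ?_
          exact mul_le_mul_of_nonneg_left
            (add_le_add (hbound (φ kk)) le_rfl) (norm_nonneg _)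
        · simpa using hdiff0.mul_const (R + ‖Tl‖)
      have hfuneq : (fun kk => Ts (φ kk) * (Ts (φ kk))ᵀ) = fun kk => Zs (φ kk) :=
        funext fun kk => hTs (φ kk)
      rw [hfuneq] at hTTlim
      have hZTl : Tl * Tlᵀ = Sbar * Sbarᵀ := by
        rw [tendsto_nhds_unique hTTlim hZlim, hZbar]
      obtain ⟨Q, hQ, hSbarEq⟩ := exists_rotation Tl Sbar hZTl
      have hQfac : ∀ kk, (Ts (φ kk) * Q) * (Ts (φ kk) * Q)ᵀ = Zs (φ kk) := by
        intro kk
        rw [Matrix.transpose_mul]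
        calc Ts (φ kk) * Q * (Qᵀ * (Ts (φ kk))ᵀ)
            = Ts (φ kk) * (Q * Qᵀ) * (Ts (φ kk))ᵀ := by
              simp only [Matrix.mul_assoc]
          _ = Zs (φ kk) := by rw [hQ, Matrix.mul_one, hTs]
      have hfar : ∀ kk, ε ≤ ‖Ts (φ kk) * Q - Sbar‖ :=
        fun kk => hbad (φ kk) _ (hQfac kk)
      have hnear : Tendsto (fun kk => ‖Ts (φ kk) * Q - Sbar‖) atTop (𝓝 0) := by
        refine squeeze_zero_norm (f := fun kk => ‖Ts (φ kk) * Q - Sbar‖)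
          (a := fun kk => ‖Ts (φ kk) - Tl‖ * ‖Q‖) ?_ ?_
        · intro kk
          have : Ts (φ kk) * Q - Sbar = (Ts (φ kk) - Tl) * Q := by
            rw [hSbarEq, Matrix.sub_mul]
          rw [norm_norm, this]
          exact Matrix.frobenius_norm_mul _ _
        · simpa using hdiff0.mul_const ‖Q‖
      have := hnear.eventually (eventually_lt_nhds hε)
      obtain ⟨N, hN⟩ := this.exists
      exact absurd (hfar N) (not_le.mpr hN)
    obtain ⟨δ, hδ, hkey⟩ := key
    refine ⟨δ, hδ, fun Z hZpsd hZrank hfr => ?_⟩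
    rw [frob_eq_norm] at hfr
    obtain ⟨S, hSZ, hSd⟩ := hkey Z hZpsd hZrank hfr
    rw [hZbar, ← hSZ]
    exact H S (by rw [frob_eq_norm]; exact hSd)

end Aux
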